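/- There exists κ₀ > 0 such that for every κ ≥ κ₀, the sum over all finite connected sets X ⊆ ℤ³ containing the origin of e^{−κ·|X|} is at most 1. -/

import Mathlib

open Relation

/-- Two points of `ℤ³` are adjacent if they are at `ℓ∞`-distance at most 1
(touching, possibly only at corners or edges). -/
def ZAdj (a b : Fin 3 → ℤ) : Prop := ∀ i, |a i - b i| ≤ 1

/-- A finite set `X ⊆ ℤ³` is connected if it is nonempty and any two of its points
are joined by a chain of points of `X` with consecutive points adjacent. -/
def ZConnected (X : Finset (Fin 3 → ℤ)) : Prop :=
  X.Nonempty ∧ ∀ x ∈ X, ∀ y ∈ X,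
    Relation.ReflTransGen (fun a b => a ∈ X ∧ b ∈ X ∧ ZAdj a b) x y

namespace Anim


abbrev V := Fin 3 → ℤ

lemma zadj_refl (a : V) : ZAdj a a := fun i => by simp
lemma zadj_symm {a b : V} (h : ZAdj a b) : ZAdj b a := fun i => by
  rw [abs_sub_comm]; exact h i

def Step (X : Finset V) (a b : V) : Prop := a ∈ X ∧ b ∈ X ∧ ZAdj a b

def IsWalk (X : Finset V) (x : V) (l : List V) : Prop :=
  List.Chain ZAdj x l ∧ ∀ a ∈ x :: l, a ∈ X

lemma chain_concat : ∀ (l : List V) (x c : V), List.Chain ZAdj x l →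
    ZAdj ((x :: l).getLast (List.cons_ne_nil x l)) c → List.Chain ZAdj x (l ++ [c]) := by
  intro l
  induction l with
  | nil => intro x c _ h2; exact List.Chain.cons (by simpa using h2) List.Chain.nil
  | cons b t ih =>
    intro x c hc h2
    simp only [List.Chain, List.isChain_cons_cons] at hc
    exact List.Chain.cons hc.1 (ih b c hc.2 (by simpa [List.getLast_cons] using h2))

lemma getLast_cons_concat {x c : V} {l : List V} :
    (x :: (l ++ [c])).getLast (List.cons_ne_nil _ _) = c :=
  List.getLast_concat (l := x :: l)

lemma exists_walk {X : Finset V} {x y : V} (hx : x ∈ X)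
    (h : Relation.ReflTransGen (Step X) x y) :
    ∃ l, IsWalk X x l ∧ (x :: l).getLast (List.cons_ne_nil x l) = y := by
  induction h with
  | refl => exact ⟨[], ⟨List.Chain.nil, by simpa using hx⟩, rfl⟩
  | tail h1 h2 ih =>
    rename_i b c
    obtain ⟨l, ⟨hc, hm⟩, hl⟩ := ih
    refine ⟨l ++ [c], ⟨chain_concat l x c hc (hl ▸ h2.2.2), ?_⟩, getLast_cons_concat⟩
    intro a ha
    rcases List.mem_cons.1 ha with h' | h'
    · exact hm _ (by simp [h'])
    · rcases List.mem_append.1 h' with h'' | h''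
      · exact hm _ (by simp [h''])
      · simp only [List.mem_singleton] at h''; subst h''; exact h2.2.1

lemma walk_rtg {X : Finset V} : ∀ (l : List V) (x : V), IsWalk X x l →
    Relation.ReflTransGen (Step X) x ((x :: l).getLast (List.cons_ne_nil x l)) := by
  intro l
  induction l with
  | nil => intro x _; exact Relation.ReflTransGen.refl
  | cons b t ih =>
    intro x ⟨hc, hm⟩
    simp only [List.Chain, List.isChain_cons_cons] at hc
    have h0 : Relation.ReflTransGen (Step X) b ((b :: t).getLast (List.cons_ne_nil b t)) :=
      ih b ⟨hc.2, fun a ha => hm a (List.mem_cons_of_mem _ ha)⟩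
    have h1 : Step X x b := ⟨hm x (by simp), hm b (by simp), hc.1⟩
    simpa [List.getLast_cons] using Relation.ReflTransGen.head h1 h0


lemma chain_concat' : ∀ (l : List V) (x c : V), List.Chain ZAdj x (l ++ [c]) →
    List.Chain ZAdj x l ∧ ZAdj ((x :: l).getLast (List.cons_ne_nil x l)) c := by
  intro l
  induction l with
  | nil => intro x c h; rw [List.nil_append] at h; simp only [List.Chain] at h; rw [List.isChain_cons_cons] at h
           exact ⟨List.Chain.nil, by simpa using h.1⟩
  | cons b t ih =>
    intro x c h
    rw [List.cons_append] at h; simp only [List.Chain] at h; rw [List.isChain_cons_cons] at h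
    obtain ⟨h1, h2⟩ := h
    obtain ⟨h3, h4⟩ := ih b c h2
    exact ⟨List.Chain.cons h1 h3, by simpa [List.getLast_cons] using h4⟩

lemma shortcut {X : Finset V} {x z : V} {l : List V} (hw : IsWalk X x l) (hz : z ∈ l) :
    ∃ s t : List V, l = s ++ z :: t ∧ IsWalk X x (s ++ [z]) ∧
      (x :: (s ++ [z])).getLast (List.cons_ne_nil _ _) = z := by
  obtain ⟨s, t, rfl⟩ := List.append_of_mem hz
  refine ⟨s, t, rfl, ⟨(List.isChain_cons_split.1 hw.1).1, ?_⟩, getLast_cons_concat⟩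
  intro a ha
  apply hw.2
  rcases List.mem_cons.1 ha with h' | h'
  · simp [h']
  · rcases List.mem_append.1 h' with h'' | h''
    · simp [h'']
    · simp only [List.mem_singleton] at h''; subst h''; simp

noncomputable def wdist (X : Finset V) (x z : V) : ℕ :=
  sInf {n | ∃ l, IsWalk X x l ∧ (x :: l).getLast (List.cons_ne_nil x l) = z ∧ l.length = n}

lemma key {X : Finset V} {x : V} (hx : x ∈ X)
    (hconn : ∀ y ∈ X, ReflTransGen (Step X) x y) (h2 : 1 < X.card) :
    ∃ z ∈ X, z ≠ x ∧ (∀ y ∈ X.erase z, ReflTransGen (Step (X.erase z)) x y) ∧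
      ∃ w ∈ X.erase z, ZAdj w z := by
  have hne : ∀ z ∈ X, {n | ∃ l, IsWalk X x l ∧
      (x :: l).getLast (List.cons_ne_nil x l) = z ∧ l.length = n}.Nonempty := by
    intro z hz
    obtain ⟨l, h1, h2⟩ := exists_walk hx (hconn z hz)
    exact ⟨l.length, l, h1, h2, rfl⟩
  have hex : (X.erase x).Nonempty := by
    rw [← Finset.card_pos, Finset.card_erase_of_mem hx]; omega
  obtain ⟨z, hzmem, hmax⟩ := Finset.exists_max_image (X.erase x) (wdist X x) hex
  obtain ⟨hzx, hzX⟩ := Finset.mem_erase.1 hzmem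
  have dmax : ∀ w ∈ X, w ≠ z → wdist X x w ≤ wdist X x z := by
    intro w hw hwz
    by_cases hwx : w = x
    · have h0 : wdist X x x ≤ 0 :=
        Nat.sInf_le ⟨[], ⟨List.Chain.nil, by simpa using hx⟩, rfl, rfl⟩
      rw [hwx]; omega
    · exact hmax w (Finset.mem_erase.2 ⟨hwx, hw⟩)
  have hnotin : ∀ w ∈ X, w ≠ z → ∀ l, IsWalk X x l →
      (x :: l).getLast (List.cons_ne_nil x l) = w → l.length = wdist X x w → z ∉ x :: l := by
    intro w hw hwz l hwalk hlast hlen hmem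
    have hzl : z ∈ l := by
      rcases List.mem_cons.1 hmem with h' | h'
      · exact absurd h' hzx
      · exact h'
    obtain ⟨s, t, hl, hwalk', hlast'⟩ := shortcut hwalk hzl
    have hdz : wdist X x z ≤ s.length + 1 :=
      Nat.sInf_le ⟨s ++ [z], hwalk', hlast', by simp⟩
    have hlen' : l.length = s.length + 1 + t.length := by subst hl; simp; omega
    have hdw : wdist X x w ≤ wdist X x z := dmax w hw hwz
    have ht : t = [] := List.length_eq_zero_iff.1 (by omega)
    subst ht
    refine hwz ?_
    rw [← hlast, ← hlast']
    congr 1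
    rw [hl]
  refine ⟨z, hzX, hzx, ?_, ?_⟩
  · intro y hy
    obtain ⟨hyz, hyX⟩ := Finset.mem_erase.1 hy
    obtain ⟨l, hwalk, hlast, hlen⟩ := Nat.sInf_mem (hne y hyX)
    have hlen' : l.length = wdist X x y := hlen
    have hz : z ∉ x :: l := hnotin y hyX hyz l hwalk hlast hlen'
    have hwalk' : IsWalk (X.erase z) x l := by
      refine ⟨hwalk.1, fun a ha => Finset.mem_erase.2 ⟨?_, hwalk.2 a ha⟩⟩
      rintro rfl; exact hz ha
    have := walk_rtg l x hwalk'
    rwa [hlast] at this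
  · obtain ⟨l, hwalk, hlast, hlen0⟩ := Nat.sInf_mem (hne z hzX)
    have hlen : l.length = wdist X x z := hlen0
    have hlnil : l ≠ [] := by
      rintro rfl; exact hzx (by simpa using hlast.symm)
    have hdecomp : l = l.dropLast ++ [z] := by
      conv_lhs => rw [← List.dropLast_append_getLast hlnil]
      rw [List.getLast_cons hlnil] at hlast
      rw [hlast]
    have hchain2 := chain_concat' l.dropLast x z (hdecomp ▸ hwalk.1)
    set w := (x :: l.dropLast).getLast (List.cons_ne_nil _ _) with hw
    have hwX : w ∈ X := hwalk.2 w (by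
      have : w ∈ x :: l.dropLast := List.getLast_mem _
      rcases List.mem_cons.1 this with h' | h'
      · simp [h']
      · exact List.mem_cons_of_mem _ (List.dropLast_sublist l |>.mem h'))
    have hwz : w ≠ z := by
      intro hwzeq
      have hzmem' : z ∈ x :: l.dropLast := hwzeq ▸ List.getLast_mem _
      have hzdl : z ∈ l.dropLast := by
        rcases List.mem_cons.1 hzmem' with h' | h'
        · exact absurd h' hzx
        · exact h'
      have hwalkdl : IsWalk X x l.dropLast := by
        refine ⟨hchain2.1, fun a ha => hwalk.2 a ?_⟩
        rcases List.mem_cons.1 ha with h' | h'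
        · simp [h']
        · exact List.mem_cons_of_mem _ (List.dropLast_sublist l |>.mem h')
      obtain ⟨s, t, hsl, hwalk', hlast'⟩ := shortcut hwalkdl hzdl
      have hdz : wdist X x z ≤ s.length + 1 :=
        Nat.sInf_le ⟨s ++ [z], hwalk', hlast', by simp⟩
      have hA : l.dropLast.length = s.length + 1 + t.length := by
        rw [hsl]; simp; omega
      have hB : l.dropLast.length = l.length - 1 := List.length_dropLast
      have hC : 0 < l.length := List.length_pos_iff.2 hlnil
      omega
    exact ⟨w, Finset.mem_erase.2 ⟨hwz, hwX⟩, hchain2.2⟩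

lemma exists_tour : ∀ (n : ℕ) (X : Finset V) (x : V), X.card ≤ n → x ∈ X →
    (∀ y ∈ X, ReflTransGen (Step X) x y) →
    ∃ l : List V, List.Chain ZAdj x l ∧ (∀ a, a ∈ x :: l ↔ a ∈ X) ∧
      l.length + 2 ≤ 2 * X.card := by
  intro n
  induction n with
  | zero =>
    intro X x hcard hx _
    exact absurd (Finset.card_pos.2 ⟨x, hx⟩) (by omega)
  | succ n ih =>
    intro X x hcard hx hconn
    have hpos : 0 < X.card := Finset.card_pos.2 ⟨x, hx⟩
    by_cases hone : X.card ≤ 1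
    · refine ⟨[], List.Chain.nil, ?_, by simp only [List.length_nil]; omega⟩
      intro a
      constructor
      · intro ha; simp only [List.mem_singleton] at ha; subst ha; exact hx
      · intro ha; simp [Finset.card_le_one.1 hone a ha x hx]
    · obtain ⟨z, hzX, hzx, hconn', w, hwmem, hadj⟩ := key hx hconn (by omega)
      have hxz : x ∈ X.erase z := Finset.mem_erase.2 ⟨fun h => hzx h.symm, hx⟩
      have hcard' : (X.erase z).card = X.card - 1 := Finset.card_erase_of_mem hzX
      obtain ⟨l', hchain', hmem', hlen'⟩ := ih (X.erase z) x (by omega) hxz hconn'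
      have hXchar : ∀ a, a ∈ X ↔ a = z ∨ a ∈ X.erase z := by
        intro a
        constructor
        · intro h
          by_cases haz : a = z
          · exact Or.inl haz
          · exact Or.inr (Finset.mem_erase.2 ⟨haz, h⟩)
        · rintro (rfl | h)
          · exact hzX
          · exact Finset.mem_of_mem_erase h
      have hwx : w ∈ x :: l' := (hmem' w).2 hwmem
      rcases List.mem_cons.1 hwx with rfl | hwl
      · -- w = x
        refine ⟨z :: w :: l', ?_, ?_, ?_⟩
        · exact List.Chain.cons hadj (List.Chain.cons (zadj_symm hadj) hchain')
        · intro a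
          rw [hXchar a]
          have := hmem' a
          simp only [List.mem_cons] at this ⊢
          tauto
        · simp only [List.length_cons]; omega
      · obtain ⟨s, t, rfl⟩ := List.append_of_mem hwl
        refine ⟨s ++ w :: z :: w :: t, ?_, ?_, ?_⟩
        · have h1 := List.isChain_cons_split.1 hchain'
          exact List.isChain_cons_split.2 ⟨h1.1,
            List.Chain.cons hadj
              (List.Chain.cons (zadj_symm hadj) h1.2)⟩
        · intro a
          rw [hXchar a]
          have := hmem' a
          simp only [List.mem_cons, List.mem_append] at this ⊢
          tauto
        · have : (s ++ w :: t).length = s.length + 1 + t.length := by simp; omega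
          simp only [List.length_append, List.length_cons] at *
          omega

lemma chain_replicate : ∀ (m : ℕ) (x : V) (l : List V), List.Chain ZAdj x l →
    List.Chain ZAdj x (List.replicate m x ++ l) := by
  intro m
  induction m with
  | zero => intro x l h; simpa using h
  | succ n ih =>
    intro x l h
    rw [List.replicate_succ, List.cons_append]
    exact List.Chain.cons (zadj_refl x) (ih x l h)

lemma exists_walk_exact {X : Finset V} (h : ZConnected X) (h0 : (0 : V) ∈ X) :
    ∃ l : List V, List.Chain ZAdj 0 l ∧ (∀ a, a ∈ (0 : V) :: l ↔ a ∈ X) ∧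
      l.length = 2 * X.card - 2 := by
  obtain ⟨l, hchain, hmem, hlen⟩ := exists_tour X.card X 0 le_rfl h0 (h.2 0 h0)
  refine ⟨List.replicate (2 * X.card - 2 - l.length) 0 ++ l,
    chain_replicate _ 0 l hchain, ?_, ?_⟩
  · intro a
    rw [← hmem a]
    simp only [List.mem_cons, List.mem_append, List.mem_replicate]
    tauto
  · have hpos : 0 < X.card := Finset.card_pos.2 h.1
    simp only [List.length_append, List.length_replicate]
    omega

def diffs : V → List V → List V
  | _, [] => []
  | x, b :: l => (b - x) :: diffs b l

lemma diffs_inj : ∀ (l l' : List V) (x : V), diffs x l = diffs x l' → l = l' := by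
  intro l
  induction l with
  | nil =>
    intro l' x h
    cases l' with
    | nil => rfl
    | cons b t => simp [diffs] at h
  | cons b t ih =>
    intro l' x h
    cases l' with
    | nil => simp [diffs] at h
    | cons b' t' =>
      simp only [diffs, List.cons.injEq] at h
      have hb : b = b' := by
        have := h.1
        funext i
        have := congrFun this i
        simp only [Pi.sub_apply] at this
        omega
      subst hb
      rw [ih t' b h.2]

lemma diffs_length : ∀ (l : List V) (x : V), (diffs x l).length = l.length := by
  intro l
  induction l with
  | nil => intro x; rfl
  | cons b t ih => intro x; simp [diffs, ih b]

lemma diffs_small : ∀ (l : List V) (x : V), List.Chain ZAdj x l →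
    ∀ v ∈ diffs x l, ∀ i, |v i| ≤ 1 := by
  intro l
  induction l with
  | nil => intro x _ v hv; simp [diffs] at hv
  | cons b t ih =>
    intro x hc v hv i
    simp only [List.Chain, List.isChain_cons_cons] at hc
    rcases List.mem_cons.1 hv with rfl | hv'
    · simp only [Pi.sub_apply]
      rw [abs_sub_comm]
      exact hc.1 i
    · exact ih b hc.2 v hv' i

def toF (v : V) : Fin 3 → Fin 3 := fun i => ⟨min 2 (v i + 1).toNat, by omega⟩

lemma toF_inj {v w : V} (hv : ∀ i, |v i| ≤ 1) (hw : ∀ i, |w i| ≤ 1)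
    (h : toF v = toF w) : v = w := by
  funext i
  have h1 := congrFun h i
  have hv' := hv i; have hw' := hw i
  rw [abs_le] at hv' hw'
  simp only [toF, Fin.mk.injEq] at h1
  omega

lemma map_toF_inj : ∀ (l l' : List V), (∀ v ∈ l, ∀ i, |v i| ≤ 1) →
    (∀ v ∈ l', ∀ i, |v i| ≤ 1) → l.map toF = l'.map toF → l = l' := by
  intro l
  induction l with
  | nil =>
    intro l' _ _ h
    cases l' with
    | nil => rfl
    | cons b t => simp at h
  | cons b t ih =>
    intro l' h1 h2 h
    cases l' with
    | nil => simp at h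
    | cons b' t' =>
      simp only [List.map_cons, List.cons.injEq] at h
      have hb : b = b' := toF_inj (h1 b (by simp)) (h2 b' (by simp)) h.1
      subst hb
      rw [ih t' (fun v hv => h1 v (by simp [hv])) (fun v hv => h2 v (by simp [hv])) h.2]
abbrev S := {X : Finset V // ZConnected X ∧ (0 : Fin 3 → ℤ) ∈ X}

noncomputable def walkOf (X : S) : List V := (exists_walk_exact X.2.1 X.2.2).choose

lemma walkOf_spec (X : S) : List.Chain ZAdj 0 (walkOf X) ∧
    (∀ a, a ∈ (0 : V) :: walkOf X ↔ a ∈ X.1) ∧ (walkOf X).length = 2 * X.1.card - 2 :=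
  (exists_walk_exact X.2.1 X.2.2).choose_spec

noncomputable def codeOf (X : S) : List (Fin 3 → Fin 3) := (diffs 0 (walkOf X)).map toF

lemma codeOf_inj {X Y : S} (h : codeOf X = codeOf Y) : X = Y := by
  have hX := walkOf_spec X
  have hY := walkOf_spec Y
  have hd : diffs 0 (walkOf X) = diffs 0 (walkOf Y) :=
    map_toF_inj _ _ (diffs_small _ _ hX.1) (diffs_small _ _ hY.1) h
  have hw : walkOf X = walkOf Y := diffs_inj _ _ 0 hd
  apply Subtype.ext
  apply Finset.ext
  intro a
  rw [← hX.2.1 a, ← hY.2.1 a, hw]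

lemma codeOf_length (X : S) : (codeOf X).length = 2 * X.1.card - 2 := by
  rw [codeOf, List.length_map, diffs_length, (walkOf_spec X).2.2]

noncomputable def enc (n : ℕ) (Y : {X : S // X.1.card = n}) :
    List.Vector (Fin 3 → Fin 3) (2 * n - 2) :=
  ⟨codeOf Y.1, by rw [codeOf_length, Y.2]⟩

lemma enc_inj (n : ℕ) : Function.Injective (enc n) := by
  intro Y Z h
  exact Subtype.ext (codeOf_inj (congrArg Subtype.val h))

end Anim

/-- for `κ` large enough, the sum over all finite connected sets
`X ⊆ ℤ³` containing the origin of `e^{−κ|X|}` is at most `1`. -/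
theorem sum_over_connected_sets_le_one :
    ∃ κ₀ : ℝ, 0 < κ₀ ∧ ∀ κ : ℝ, κ₀ ≤ κ →
      (∑' X : {X : Finset (Fin 3 → ℤ) // ZConnected X ∧ (0 : Fin 3 → ℤ) ∈ X},
        ENNReal.ofReal (Real.exp (-κ * (X.1.card : ℝ)))) ≤ 1 := by
  refine ⟨Real.log 1458, Real.log_pos (by norm_num), ?_⟩
  intro κ hκ
  set r : ENNReal := 729 * ENNReal.ofReal (Real.exp (-κ)) with hr_def
  have hexp : Real.exp (-κ) ≤ 1458⁻¹ := by
    calc Real.exp (-κ) ≤ Real.exp (-Real.log 1458) := Real.exp_le_exp.2 (by linarith)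
    _ = 1458⁻¹ := by rw [Real.exp_neg, Real.exp_log (by norm_num)]
  have hr : r ≤ 2⁻¹ := by
    rw [hr_def]
    calc (729 : ENNReal) * ENNReal.ofReal (Real.exp (-κ))
        = ENNReal.ofReal (729 * Real.exp (-κ)) := by
          rw [ENNReal.ofReal_mul (by norm_num)]
          norm_num
    _ ≤ ENNReal.ofReal (2⁻¹) := ENNReal.ofReal_le_ofReal (by
          rw [show (2 : ℝ)⁻¹ = 729 * 1458⁻¹ by norm_num]
          exact mul_le_mul_of_nonneg_left hexp (by norm_num))
    _ = 2⁻¹ := by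
          rw [ENNReal.ofReal_inv_of_pos (by norm_num)]
          norm_num
  set h : ℕ → ENNReal := fun n => if n = 0 then 0 else r ^ n with hh_def
  set F : Anim.S → ℕ := fun X => X.1.card with hF_def
  have step1 :
      (∑' X : Anim.S, ENNReal.ofReal (Real.exp (-κ * (X.1.card : ℝ)))) ≤ ∑' n : ℕ, h n := by
    rw [← Equiv.tsum_eq (Equiv.sigmaFiberEquiv F)
      (fun X : Anim.S => ENNReal.ofReal (Real.exp (-κ * (X.1.card : ℝ)))),
      ENNReal.tsum_sigma']
    refine ENNReal.tsum_le_tsum (fun n => ?_)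
    rcases Nat.eq_zero_or_pos n with rfl | hn
    · have hempty : IsEmpty {X : Anim.S // F X = 0} := by
        constructor
        rintro ⟨X, hX⟩
        have h1 := Finset.card_pos.2 X.2.1.1
        have h2 : X.1.card = 0 := hX
        omega
      rw [tsum_empty]
      exact zero_le
    · have hconst : ∀ Y : {X : Anim.S // F X = n},
          ENNReal.ofReal (Real.exp (-κ * (((Equiv.sigmaFiberEquiv F) ⟨n, Y⟩).1.card : ℝ)))
            = ENNReal.ofReal (Real.exp (-κ * (n : ℝ))) := by
        intro Y
        have : ((Equiv.sigmaFiberEquiv F) ⟨n, Y⟩).1.card = n := Y.2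
        rw [this]
      calc (∑' Y : {X : Anim.S // F X = n},
            ENNReal.ofReal (Real.exp (-κ * (((Equiv.sigmaFiberEquiv F) ⟨n, Y⟩).1.card : ℝ))))
          = ∑' _Y : {X : Anim.S // F X = n}, ENNReal.ofReal (Real.exp (-κ * (n : ℝ))) :=
            tsum_congr hconst
        _ ≤ ∑' _v : List.Vector (Fin 3 → Fin 3) (2 * n - 2),
              ENNReal.ofReal (Real.exp (-κ * (n : ℝ))) :=
            ENNReal.tsum_comp_le_tsum_of_injective (Anim.enc_inj n) _
        _ = (Fintype.card (List.Vector (Fin 3 → Fin 3) (2 * n - 2)) : ENNReal) *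
              ENNReal.ofReal (Real.exp (-κ * (n : ℝ))) := by
            rw [tsum_fintype]
            simp [Finset.sum_const, nsmul_eq_mul]
        _ = (27 : ENNReal) ^ (2 * n - 2) * ENNReal.ofReal (Real.exp (-κ)) ^ n := by
            rw [card_vector]
            have h27 : Fintype.card (Fin 3 → Fin 3) = 27 := by simp
            rw [h27]
            have : Real.exp (-κ * (n : ℝ)) = Real.exp (-κ) ^ n := by
              rw [mul_comm, Real.exp_nat_mul]
            rw [this, ENNReal.ofReal_pow (Real.exp_nonneg _)]
            push_cast
            ring
        _ ≤ (27 : ENNReal) ^ (2 * n) * ENNReal.ofReal (Real.exp (-κ)) ^ n := by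
            exact mul_le_mul_left (pow_le_pow_right₀ (by norm_num) (by omega)) _
        _ = r ^ n := by
            rw [hr_def, mul_pow, pow_mul]
            norm_num
        _ = h n := by simp only [hh_def]; rw [if_neg (by omega)]
  have step2 : (∑' n : ℕ, h n) ≤ 1 := by
    have hgeo : (∑' n : ℕ, r ^ n) = (1 - r)⁻¹ := ENNReal.tsum_geometric r
    have hsplit : (∑' n : ℕ, r ^ n) = 1 + ∑' n : ℕ, h n := by
      calc (∑' n : ℕ, r ^ n)
          = ∑' n : ℕ, ((if n = 0 then (1 : ENNReal) else 0) + h n) := by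
            refine tsum_congr (fun n => ?_)
            rcases n with _ | m <;> simp [hh_def]
        _ = (∑' n : ℕ, if n = 0 then (1 : ENNReal) else 0) + ∑' n : ℕ, h n :=
            ENNReal.tsum_add
        _ = 1 + ∑' n : ℕ, h n := by rw [tsum_ite_eq]
    have hsub : (2 : ENNReal)⁻¹ ≤ 1 - r := by
      calc (2 : ENNReal)⁻¹ = 1 - 2⁻¹ := ENNReal.one_sub_inv_two.symm
        _ ≤ 1 - r := tsub_le_tsub_left hr 1
    have hfin : (1 - r)⁻¹ ≤ 2 := by
      calc (1 - r)⁻¹ ≤ ((2 : ENNReal)⁻¹)⁻¹ := ENNReal.inv_le_inv.2 hsub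
        _ = 2 := inv_inv 2
    have : 1 + (∑' n : ℕ, h n) ≤ 1 + 1 := by
      rw [← hsplit, hgeo]
      calc (1 - r)⁻¹ ≤ 2 := hfin
        _ = 1 + 1 := one_add_one_eq_two.symm
    exact (ENNReal.add_le_add_iff_left ENNReal.one_ne_top).1 this
  exact le_trans step1 step2
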